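/- If a sequence I = (I_n) of open intervals admits no pairwise disjoint subsequence J with λ([0,1] \ ⋃J) = 0, then there exists n ∈ ℕ such that λ([0,1] \ U_{2^{-n}}) > 0, where U_ε := ⋃{I_k : diam(I_k) < ε}. -/

import Mathlib

open MeasureTheory Set

def itv (p : ℝ × ℝ) : Set ℝ := Set.Ioo p.1 p.2

def Captures (I : ℕ → ℝ × ℝ) (x : ℝ) : Prop :=
  ∀ ε : ℝ, 0 < ε → ∃ n, Metric.diam (itv (I n)) < ε ∧ x ∈ itv (I n)

def IsVitaliCover (I : ℕ → ℝ × ℝ) (A : Set ℝ) : Prop :=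
  ∀ x ∈ A, Captures I x

def Eliminates (I : ℕ → ℝ × ℝ) (S : Set ℕ) (A : Set ℝ) : Prop :=
  (S.Pairwise fun m n => Disjoint (itv (I m)) (itv (I n))) ∧
  volume (A \ ⋃ n ∈ S, itv (I n)) = 0

def Saturated (I : ℕ → ℝ × ℝ) : Prop :=
  IsVitaliCover I (⋃ n, itv (I n))

theorem stmt10 (I : ℕ → ℝ × ℝ)
    (h : ¬ ∃ S : Set ℕ, Eliminates I S (Set.Icc (0:ℝ) 1)) :
    ∃ n : ℕ, 0 < volume (Set.Icc (0:ℝ) 1 \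
      ⋃ k ∈ {k : ℕ | Metric.diam (itv (I k)) < (2:ℝ)⁻¹ ^ n}, itv (I k)) := by
  by_contra hc
  push_neg at hc
  have hzero : ∀ n : ℕ, volume (Set.Icc (0:ℝ) 1 \
      ⋃ k ∈ {k : ℕ | Metric.diam (itv (I k)) < (2:ℝ)⁻¹ ^ n}, itv (I k)) = 0 :=
    fun n => le_antisymm (hc n) zero_le
  -- the set of captured points
  set A : Set ℝ := {x ∈ Set.Icc (0:ℝ) 1 | Captures I x} with hA
  -- [0,1] \ A is null
  have hnullA : volume (Set.Icc (0:ℝ) 1 \ A) = 0 := by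
    have hsub : Set.Icc (0:ℝ) 1 \ A ⊆ ⋃ n : ℕ, (Set.Icc (0:ℝ) 1 \
        ⋃ k ∈ {k : ℕ | Metric.diam (itv (I k)) < (2:ℝ)⁻¹ ^ n}, itv (I k)) := by
      rintro x ⟨hx1, hx2⟩
      have : ¬ Captures I x := fun hcap => hx2 ⟨hx1, hcap⟩
      rw [Captures] at this
      push_neg at this
      obtain ⟨ε, hε, hbad⟩ := this
      obtain ⟨n, hn⟩ : ∃ n : ℕ, (2:ℝ)⁻¹ ^ n < ε := by
        refine exists_pow_lt_of_lt_one hε (by norm_num)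
      refine Set.mem_iUnion.2 ⟨n, hx1, ?_⟩
      intro hmem
      rw [Set.mem_iUnion₂] at hmem
      obtain ⟨k, hk, hxk⟩ := hmem
      exact absurd hxk (hbad k (lt_trans hk hn))
    refine measure_mono_null hsub ?_
    exact (measure_iUnion_null fun n => hzero n)
  -- apply the Vitali covering theorem with index type ℕ × ℝ
  set r : ℕ × ℝ → ℝ := fun p => (I p.1).2 - (I p.1).1 with hr
  set c : ℕ × ℝ → ℝ := fun p => p.2 with hcdef
  set B : ℕ × ℝ → Set ℝ := fun p => Set.Icc (I p.1).1 (I p.1).2 with hBdef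
  set t : Set (ℕ × ℝ) := {p | p.2 ∈ itv (I p.1)} with ht
  have hB : ∀ p ∈ t, B p ⊆ Metric.closedBall (c p) (r p) := by
    rintro ⟨n, x⟩ hp y hy
    have hx : x ∈ Set.Ioo (I n).1 (I n).2 := hp
    have hy' : y ∈ Set.Icc (I n).1 (I n).2 := hy
    simp only [Metric.mem_closedBall, Real.dist_eq, hr, hcdef, abs_le]
    obtain ⟨hx1, hx2⟩ := hx
    obtain ⟨hy1, hy2⟩ := hy'
    constructor <;> nlinarith
  have hμB : ∀ p ∈ t, volume (Metric.closedBall (c p) (3 * r p)) ≤ (6 : NNReal) * volume (B p) := by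
    rintro ⟨n, x⟩ hp
    have hx : x ∈ Set.Ioo (I n).1 (I n).2 := hp
    have hrpos : (0:ℝ) < (I n).2 - (I n).1 := by
      obtain ⟨h1, h2⟩ := hx; linarith
    have h6 : ((6:NNReal):ENNReal) = ENNReal.ofReal 6 := by
      simp [ENNReal.ofReal_ofNat]
    rw [Real.volume_closedBall,
      show B (n, x) = Set.Icc (I n).1 (I n).2 from rfl, Real.volume_Icc, h6,
      ← ENNReal.ofReal_mul (by norm_num)]
    apply ENNReal.ofReal_le_ofReal
    simp only [hr]
    nlinarith
  have hint : ∀ p ∈ t, (interior (B p)).Nonempty := by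
    rintro ⟨n, x⟩ hp
    have hx : x ∈ Set.Ioo (I n).1 (I n).2 := hp
    refine ⟨x, ?_⟩
    show x ∈ interior (Set.Icc (I n).1 (I n).2)
    rw [interior_Icc]
    exact hx
  have hcl : ∀ p ∈ t, IsClosed (B p) := by
    rintro ⟨n, x⟩ _; exact isClosed_Icc
  have hf : ∀ x ∈ A, ∀ ε > (0:ℝ), ∃ p ∈ t, r p ≤ ε ∧ c p = x := by
    rintro x hx ε hε
    obtain ⟨n, hdn, hxn⟩ := hx.2 ε hε
    refine ⟨(n, x), hxn, ?_, rfl⟩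
    have hab : (I n).1 ≤ (I n).2 := le_of_lt (lt_trans hxn.1 hxn.2)
    have hd : Metric.diam (itv (I n)) = (I n).2 - (I n).1 := Real.diam_Ioo hab
    show (I n).2 - (I n).1 ≤ ε
    rw [← hd]
    exact le_of_lt hdn
  have key : ∃ u ⊆ t, u.Countable ∧ u.PairwiseDisjoint B ∧
      volume (A \ ⋃ a ∈ u, B a) = 0 :=
    Vitali.exists_disjoint_covering_ae volume A t 6 r c B hB hμB hint hcl hf
  obtain ⟨u, hut, hucnt, hudisj, hunull⟩ := key
  -- build S
  refine absurd ?_ h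
  refine ⟨Prod.fst '' u, ?_, ?_⟩
  · -- pairwise disjointness of open intervals
    rintro m ⟨⟨m', x⟩, hmu, rfl⟩ n ⟨⟨n', y⟩, hnu, rfl⟩ hmn
    have hne : ((m', x) : ℕ × ℝ) ≠ (n', y) := by
      intro he; apply hmn; rw [he]
    have := hudisj hmu hnu hne
    exact (this.mono Set.Ioo_subset_Icc_self Set.Ioo_subset_Icc_self)
  · -- null complement
    have hsub : Set.Icc (0:ℝ) 1 \ ⋃ n ∈ Prod.fst '' u, itv (I n) ⊆
        (Set.Icc (0:ℝ) 1 \ A) ∪ (A \ ⋃ a ∈ u, B a) ∪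
        (⋃ a ∈ u, (B a \ itv (I a.1))) := by
      rintro x ⟨hx1, hx2⟩
      by_cases hxA : x ∈ A
      · by_cases hxB : x ∈ ⋃ a ∈ u, B a
        · right
          rw [Set.mem_iUnion₂] at hxB
          obtain ⟨a, hau, hxa⟩ := hxB
          rw [Set.mem_iUnion₂]
          refine ⟨a, hau, hxa, ?_⟩
          intro hxi
          apply hx2
          rw [Set.mem_iUnion₂]
          exact ⟨a.1, ⟨a, hau, rfl⟩, hxi⟩
        · left; right; exact ⟨hxA, hxB⟩
      · left; left; exact ⟨hx1, hxA⟩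
    refine measure_mono_null hsub ?_
    refine measure_union_null (measure_union_null hnullA hunull) ?_
    rw [measure_biUnion_null_iff hucnt]
    rintro ⟨n, x⟩ _
    have hsub2 : B (n, x) \ itv (I n) ⊆ ({(I n).1, (I n).2} : Set ℝ) := by
      rintro y ⟨hy1, hy2⟩
      rcases hy1 with ⟨ha, hb⟩
      rcases eq_or_lt_of_le ha with h | h
      · left; exact h.symm
      · rcases eq_or_lt_of_le hb with h' | h'
        · right; exact h'
        · exact absurd ⟨h, h'⟩ hy2
    refine measure_mono_null hsub2 ?_
    exact (Set.Countable.insert _ (Set.countable_singleton _)).measure_zero _
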